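/- Let d be odd, M a maximally isotropic subgroup of (ZMod d)^{2n} (isotropic with |M|=d^n) and v ∈ (ZMod d)^{2n}. The Wigner function of the stabilizer state |M,v⟩ is the normalized indicator function of the coset M+v: W_{|M,v⟩}(a) = d^{-n} if a ∈ M+v and 0 otherwise. -/

import Mathlib

open scoped BigOperators
open Finset Matrix
open scoped ComplexOrder

attribute [instance] Classical.propDecidable

/-- The character `χ(t) = exp(2πit/d)` on `ZMod d`. -/
noncomputable def chi (d : ℕ) (t : ZMod d) : ℂ :=
  Complex.exp (2 * Real.pi * Complex.I * (t.val : ℂ) / (d : ℂ))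

/-- The standard symplectic form on `(Fin n → R) × (Fin n → R)`. -/
def symp (R : Type) [CommRing R] (n : ℕ) (v w : (Fin n → R) × (Fin n → R)) : R :=
  (∑ i, v.1 i * w.2 i) - ∑ i, v.2 i * w.1 i

/-- Single-particle Weyl operator `w(p,q) = χ(-2⁻¹pq) ẑ(p) x̂(q)` on `ℂ^d`. -/
noncomputable def weyl1 (d : ℕ) (p q : ZMod d) : Matrix (ZMod d) (ZMod d) ℂ :=
  Matrix.of fun x y => chi d (-(2⁻¹ : ZMod d) * p * q + p * x) * (if y = x - q then 1 else 0)

/-- Multi-particle Weyl operator on `(ℂ^d)^{⊗n}` in coordinates. -/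
noncomputable def weyl (d n : ℕ) (p q : Fin n → ZMod d) :
    Matrix (Fin n → ZMod d) (Fin n → ZMod d) ℂ :=
  Matrix.of fun x y =>
    chi d (-(2⁻¹ : ZMod d) * (∑ i, p i * q i) + ∑ i, p i * x i) * (if y = x - q then 1 else 0)

/-- Weyl operator indexed by a phase space point. -/
noncomputable def weylV (d n : ℕ) (v : (Fin n → ZMod d) × (Fin n → ZMod d)) :
    Matrix (Fin n → ZMod d) (Fin n → ZMod d) ℂ :=
  weyl d n v.1 v.2

/-- Action of the Weyl operator on wave functions:
`(w(p,q)ψ)(y) = χ(-2⁻¹pq + py) ψ(y-q)`. -/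
noncomputable def weylAct (d n : ℕ) (p q : Fin n → ZMod d) (ψ : (Fin n → ZMod d) → ℂ) :
    (Fin n → ZMod d) → ℂ :=
  fun y => chi d (-(2⁻¹ : ZMod d) * (∑ i, p i * q i) + ∑ i, p i * y i) * ψ (y - q)

/-- Wigner function of a pure state `ψ`. -/
noncomputable def wignerPure (d n : ℕ) [NeZero d] (ψ : (Fin n → ZMod d) → ℂ)
    (p q : Fin n → ZMod d) : ℂ :=
  ((d : ℂ) ^ n)⁻¹ * ∑ ξ : Fin n → ZMod d, chi d (-(∑ i, ξ i * p i)) *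
    (starRingEnd ℂ) (ψ (q - (2⁻¹ : ZMod d) • ξ)) * ψ (q + (2⁻¹ : ZMod d) • ξ)

lemma chi_zero (d : ℕ) [NeZero d] : chi d 0 = 1 := by simp [chi]

lemma chi_add (d : ℕ) [NeZero d] (s t : ZMod d) : chi d (s + t) = chi d s * chi d t := by
  have hd : (d : ℂ) ≠ 0 := Nat.cast_ne_zero.mpr (NeZero.ne d)
  have h : s.val + t.val = (s + t).val + d * ((s.val + t.val) / d) := by
    rw [ZMod.val_add]; exact (Nat.mod_add_div _ _).symm
  have hc : ((s.val : ℂ)) + (t.val : ℂ) = ((s + t).val : ℂ) + (d : ℂ) * (((s.val + t.val) / d : ℕ) : ℂ) := by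
    exact_mod_cast congrArg (fun x : ℕ => (x : ℂ)) h
  rw [chi, chi, chi, ← Complex.exp_add]
  set A : ℂ := (s.val : ℂ) with hA
  set B : ℂ := (t.val : ℂ) with hB
  set X : ℂ := ((s + t).val : ℂ) with hX
  set k : ℂ := (((s.val + t.val) / d : ℕ) : ℂ) with hk
  have : 2 * Real.pi * Complex.I * A / d + 2 * Real.pi * Complex.I * B / d
      = 2 * Real.pi * Complex.I * X / d + ((((s.val + t.val) / d : ℕ) : ℤ) : ℂ) * (2 * Real.pi * Complex.I) := by
    have hk2 : ((((s.val + t.val) / d : ℕ) : ℤ) : ℂ) = k := by push_cast; rfl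
    rw [hk2]
    field_simp
    linear_combination hc
  rw [this, Complex.exp_add, Complex.exp_int_mul_two_pi_mul_I, mul_one]

lemma chi_neg (d : ℕ) [NeZero d] (t : ZMod d) : chi d (-t) = (chi d t)⁻¹ := by
  have h : chi d (-t) * chi d t = 1 := by rw [← chi_add]; simp [chi_zero]
  exact eq_inv_of_mul_eq_one_left h

lemma chi_ne_zero (d : ℕ) [NeZero d] (t : ZMod d) : chi d t ≠ 0 := Complex.exp_ne_zero _

lemma chi_conj (d : ℕ) [NeZero d] (t : ZMod d) :
    (starRingEnd ℂ) (chi d t) = chi d (-t) := by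
  rw [chi_neg]
  simp only [chi]
  rw [← Complex.exp_conj, ← Complex.exp_neg]
  congr 1
  simp only [map_div₀, _root_.map_mul, Complex.conj_I, Complex.conj_natCast, Complex.conj_ofReal,
    _root_.map_ofNat]
  ring

lemma chi_eq_one_iff (d : ℕ) [NeZero d] (t : ZMod d) : chi d t = 1 ↔ t = 0 := by
  constructor
  · intro h
    rw [chi, Complex.exp_eq_one_iff] at h
    obtain ⟨k, hk⟩ := h
    have hπ : (2 * (Real.pi : ℂ) * Complex.I : ℂ) ≠ 0 := by
      simp [Real.pi_ne_zero, Complex.I_ne_zero]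
    have hd : (d : ℂ) ≠ 0 := Nat.cast_ne_zero.mpr (NeZero.ne d)
    have hval : ((t.val : ℤ) : ℂ) = ((k * d : ℤ) : ℂ) := by
      push_cast
      have h2 : 2 * (Real.pi : ℂ) * Complex.I * (t.val : ℂ)
          = (k : ℂ) * (2 * Real.pi * Complex.I) * d := by
        rw [div_eq_iff hd] at hk
        linear_combination hk
      refine mul_left_cancel₀ hπ ?_
      linear_combination h2
    have hZ : (t.val : ℤ) = k * d := by exact_mod_cast hval
    have h1 : t.val < d := ZMod.val_lt t
    have hd0 : (0 : ℤ) < (d : ℤ) := by exact_mod_cast NeZero.pos d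
    have h1' : (t.val : ℤ) < (d : ℤ) := by exact_mod_cast h1
    have h0' : (0 : ℤ) ≤ (t.val : ℤ) := Int.ofNat_nonneg t.val
    have h0 : t.val = 0 := by
      rcases le_or_gt k 0 with hk0 | hk0
      · nlinarith
      · nlinarith
    rwa [← ZMod.val_eq_zero]
  · rintro rfl; exact chi_zero d

lemma chi_mul_chi_neg (d : ℕ) [NeZero d] (t : ZMod d) : chi d t * chi d (-t) = 1 := by
  rw [← chi_add]; simp [chi_zero]

lemma normSq_chi (d : ℕ) [NeZero d] (t : ZMod d) : Complex.normSq (chi d t) = 1 := by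
  have h : chi d t * (starRingEnd ℂ) (chi d t) = 1 := by
    rw [chi_conj]; exact chi_mul_chi_neg d t
  rw [Complex.mul_conj] at h
  exact_mod_cast h

lemma sum_chi_mul (d : ℕ) [NeZero d] (c : ZMod d) :
    ∑ t : ZMod d, chi d (c * t) = if c = 0 then (d : ℂ) else 0 := by
  by_cases hc : c = 0
  · simp [hc, chi_zero, Finset.card_univ, ZMod.card]
  · simp only [hc, if_false]
    have h : ∑ t : ZMod d, chi d (c * t) = ∑ t : ZMod d, chi d (c * (t + 1)) :=
      Fintype.sum_equiv (Equiv.subRight (1 : ZMod d)) _ _ (fun t => by simp)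
    have h2 : ∑ t : ZMod d, chi d (c * (t + 1))
        = (∑ t : ZMod d, chi d (c * t)) * chi d c := by
      rw [Finset.sum_mul]
      refine Finset.sum_congr rfl fun t _ => ?_
      rw [mul_add, chi_add, mul_one]
    have h3 : (∑ t : ZMod d, chi d (c * t)) * (chi d c - 1) = 0 := by
      rw [mul_sub, mul_one, ← h2, ← h, sub_self]
    rcases mul_eq_zero.mp h3 with h4 | h4
    · exact h4
    · have h5 : chi d c = 1 := by linear_combination h4
      exact absurd ((chi_eq_one_iff d c).mp h5) hc

attribute [instance] Classical.propDecidable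
lemma sum_chi_vec (d n : ℕ) [NeZero d] (c : Fin n → ZMod d) :
    ∑ x : Fin n → ZMod d, chi d (∑ i, c i * x i) = if c = 0 then ((d : ℂ)) ^ n else 0 := by
  by_cases hc : c = 0
  · simp [hc, chi_zero, Finset.card_univ, ZMod.card]
  · simp only [hc, if_false]
    obtain ⟨i₀, hi₀⟩ := Function.ne_iff.mp hc
    simp only [Pi.zero_apply] at hi₀
    set e : Fin n → ZMod d := Pi.single i₀ (1 : ZMod d) with he
    have h : ∑ x : Fin n → ZMod d, chi d (∑ i, c i * x i)
        = ∑ x : Fin n → ZMod d, chi d (∑ i, c i * (x i + e i)) := by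
      refine Fintype.sum_equiv (Equiv.subRight e) _ _ ?_
      intro x
      simp only [Equiv.subRight_apply, Pi.sub_apply, sub_add_cancel]
    have h2 : ∀ x : Fin n → ZMod d, (∑ i, c i * (x i + e i))
        = (∑ i, c i * x i) + c i₀ := by
      intro x
      rw [Finset.sum_congr rfl (fun i _ => mul_add (c i) (x i) (e i)), Finset.sum_add_distrib]
      congr 1
      have h5 : ∀ i, c i * e i = if i = i₀ then c i₀ else 0 := by
        intro i
        by_cases hii : i = i₀ <;> simp [he, hii, Pi.single_apply]
      rw [Finset.sum_congr rfl (fun i _ => h5 i), Finset.sum_ite_eq' Finset.univ i₀]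
      simp
    have h3 : (∑ x : Fin n → ZMod d, chi d (∑ i, c i * x i)) * (chi d (c i₀) - 1) = 0 := by
      rw [mul_sub, mul_one]
      nth_rewrite 2 [h]
      rw [Finset.sum_mul, sub_eq_zero]
      refine Finset.sum_congr rfl fun x _ => ?_
      rw [h2 x, chi_add]
    rcases mul_eq_zero.mp h3 with h4 | h4
    · exact h4
    · have h5 : chi d (c i₀) = 1 := by linear_combination h4
      exact absurd ((chi_eq_one_iff d (c i₀)).mp h5) hi₀

lemma symp_sub_right (R : Type) [CommRing R] (n : ℕ) (u w w' : (Fin n → R) × (Fin n → R)) :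
    symp R n u (w - w') = symp R n u w - symp R n u w' := by
  simp only [symp, Prod.fst_sub, Prod.snd_sub, Pi.sub_apply, mul_sub, sub_mul,
    Finset.sum_sub_distrib]
  ring

lemma symp_sub_left (R : Type) [CommRing R] (n : ℕ) (u u' w : (Fin n → R) × (Fin n → R)) :
    symp R n (u - u') w = symp R n u w - symp R n u' w := by
  simp only [symp, Prod.fst_sub, Prod.snd_sub, Pi.sub_apply, mul_sub, sub_mul,
    Finset.sum_sub_distrib]
  ring

lemma sum_chi_symp (d n : ℕ) [NeZero d] (w : (Fin n → ZMod d) × (Fin n → ZMod d)) :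
    ∑ u : (Fin n → ZMod d) × (Fin n → ZMod d), chi d (symp (ZMod d) n u w)
      = if w = 0 then ((d : ℂ)) ^ (2 * n) else 0 := by
  rw [Fintype.sum_prod_type]
  have h1 : ∀ (u1 u2 : Fin n → ZMod d),
      chi d (symp (ZMod d) n (u1, u2) w)
        = chi d (∑ i, w.2 i * u1 i) * chi d (∑ i, (-w.1) i * u2 i) := by
    intro u1 u2
    rw [← chi_add]
    congr 1
    have e1 : ∑ i, w.2 i * u1 i = ∑ i, u1 i * w.2 i :=
      Finset.sum_congr rfl fun i _ => mul_comm _ _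
    have e2 : ∑ i, (-w.1) i * u2 i = -∑ i, u2 i * w.1 i := by
      rw [← Finset.sum_neg_distrib]
      exact Finset.sum_congr rfl fun i _ => by simp only [Pi.neg_apply]; ring
    rw [e1, e2]
    simp [symp, sub_eq_add_neg]
  have h2 : ∑ u1 : Fin n → ZMod d, ∑ u2 : Fin n → ZMod d, chi d (symp (ZMod d) n (u1, u2) w)
      = (∑ u1 : Fin n → ZMod d, chi d (∑ i, w.2 i * u1 i))
        * ∑ u2 : Fin n → ZMod d, chi d (∑ i, (-w.1) i * u2 i) := by
    rw [Finset.sum_mul_sum]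
    exact Finset.sum_congr rfl fun u1 _ => Finset.sum_congr rfl fun u2 _ => h1 u1 u2
  rw [h2, sum_chi_vec, sum_chi_vec]
  by_cases hw : w = 0
  · have : (2 * n) = n + n := by ring
    simp [hw, Prod.fst_zero, Prod.snd_zero, this, pow_add]
  · rcases (not_and_or.mp (fun h => hw (Prod.ext h.2 h.1) : ¬((w.2 = 0) ∧ (w.1 = 0)))) with h | h
    · simp [h, hw]
    · have : ¬(-w.1 = 0) := fun hh => h (neg_eq_zero.mp hh)
      simp [this, hw]

lemma sum_chi_symp_sub (d n : ℕ) [NeZero d]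
    (M : AddSubgroup ((Fin n → ZMod d) × (Fin n → ZMod d)))
    (hiso : ∀ m₁ ∈ M, ∀ m₂ ∈ M, symp (ZMod d) n m₁ m₂ = 0)
    (hcard : Nat.card M = d ^ n)
    (u : (Fin n → ZMod d) × (Fin n → ZMod d)) :
    (∑ m : M, chi d (symp (ZMod d) n u (m : (Fin n → ZMod d) × (Fin n → ZMod d))))
      = if u ∈ M then ((d : ℂ)) ^ n else 0 := by
  classical
  set S : ((Fin n → ZMod d) × (Fin n → ZMod d)) → ℂ :=
    fun z => ∑ m : M, chi d (symp (ZMod d) n z (m : (Fin n → ZMod d) × (Fin n → ZMod d))) with hS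
  have hcards : (Fintype.card M : ℕ) = d ^ n := by
    rw [← Nat.card_eq_fintype_card]; exact hcard
  -- value on M
  have hSM : ∀ u ∈ M, S u = (d : ℂ) ^ n := by
    intro u hu
    have : ∀ m : M, chi d (symp (ZMod d) n u (m : (Fin n → ZMod d) × (Fin n → ZMod d))) = 1 := fun m => by
      rw [hiso u hu (m : (Fin n → ZMod d) × (Fin n → ZMod d)) m.2, chi_zero]
    rw [hS]
    simp only [this, Finset.sum_const, Finset.card_univ, nsmul_eq_mul, mul_one]
    rw [hcards]
    push_cast
    rfl
  -- Parseval
  have hPar : ∑ x : (Fin n → ZMod d) × (Fin n → ZMod d), (Complex.normSq (S x) : ℂ) = (d : ℂ) ^ (2 * n) * (d : ℂ) ^ n := by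
    have e1 : ∀ x : (Fin n → ZMod d) × (Fin n → ZMod d), (Complex.normSq (S x) : ℂ) = S x * (starRingEnd ℂ) (S x) := by
      intro x; rw [Complex.mul_conj]
    have e2 : ∀ x : (Fin n → ZMod d) × (Fin n → ZMod d), S x * (starRingEnd ℂ) (S x)
        = ∑ m : M, ∑ m' : M, chi d (symp (ZMod d) n x ((m : (Fin n → ZMod d) × (Fin n → ZMod d)) - (m' : (Fin n → ZMod d) × (Fin n → ZMod d)))) := by
      intro x
      rw [hS]
      simp only [map_sum, chi_conj]
      rw [Finset.sum_mul_sum]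
      refine Finset.sum_congr rfl fun m _ => Finset.sum_congr rfl fun m' _ => ?_
      rw [← chi_add, symp_sub_right]
      ring_nf
    calc ∑ x : (Fin n → ZMod d) × (Fin n → ZMod d), (Complex.normSq (S x) : ℂ)
        = ∑ x : (Fin n → ZMod d) × (Fin n → ZMod d), ∑ m : M, ∑ m' : M, chi d (symp (ZMod d) n x ((m : (Fin n → ZMod d) × (Fin n → ZMod d)) - (m' : (Fin n → ZMod d) × (Fin n → ZMod d)))) := by
          exact Finset.sum_congr rfl fun x _ => by rw [e1 x, e2 x]
      _ = ∑ m : M, ∑ m' : M, ∑ x : (Fin n → ZMod d) × (Fin n → ZMod d), chi d (symp (ZMod d) n x ((m : (Fin n → ZMod d) × (Fin n → ZMod d)) - (m' : (Fin n → ZMod d) × (Fin n → ZMod d)))) := by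
          rw [Finset.sum_comm]
          exact Finset.sum_congr rfl fun m _ => Finset.sum_comm
      _ = ∑ m : M, ∑ m' : M, if (m : (Fin n → ZMod d) × (Fin n → ZMod d)) - (m' : (Fin n → ZMod d) × (Fin n → ZMod d)) = 0 then ((d : ℂ)) ^ (2 * n) else 0 := by
          exact Finset.sum_congr rfl fun m _ => Finset.sum_congr rfl fun m' _ =>
            sum_chi_symp d n _
      _ = ∑ m : M, ∑ m' : M, if m' = m then ((d : ℂ)) ^ (2 * n) else 0 := by
          refine Finset.sum_congr rfl fun m _ => Finset.sum_congr rfl fun m' _ => ?_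
          congr 1
          simp only [sub_eq_zero, eq_iff_iff]
          constructor
          · intro h; exact Subtype.ext h.symm
          · intro h; rw [h]
      _ = ∑ m : M, ((d : ℂ)) ^ (2 * n) := by
          exact Finset.sum_congr rfl fun m _ => by
            rw [Finset.sum_ite_eq' Finset.univ m fun _ => ((d : ℂ)) ^ (2 * n)]
            simp
      _ = (d : ℂ) ^ (2 * n) * (d : ℂ) ^ n := by
          simp only [Finset.sum_const, Finset.card_univ, nsmul_eq_mul, hcards]
          push_cast; ring
  -- real version
  have hParR : ∑ x : (Fin n → ZMod d) × (Fin n → ZMod d), Complex.normSq (S x) = ((d : ℝ) ^ (2 * n) * (d : ℝ) ^ n) := by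
    have := hPar
    rw [← Complex.ofReal_sum] at this
    have h2 : ((d : ℂ) ^ (2 * n) * (d : ℂ) ^ n) = (((d : ℝ) ^ (2 * n) * (d : ℝ) ^ n : ℝ) : ℂ) := by
      push_cast; ring
    rw [h2] at this
    exact_mod_cast this
  have hfilcard : (Finset.univ.filter (fun x : (Fin n → ZMod d) × (Fin n → ZMod d) => x ∈ M)).card = d ^ n := by
    rw [← hcards, Fintype.card_subtype]
  have hfil : ∑ x ∈ Finset.univ.filter (fun x : (Fin n → ZMod d) × (Fin n → ZMod d) => x ∈ M), Complex.normSq (S x)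
      = (d : ℝ) ^ (2 * n) * (d : ℝ) ^ n := by
    have e : ∀ x ∈ Finset.univ.filter (fun x : (Fin n → ZMod d) × (Fin n → ZMod d) => x ∈ M),
        Complex.normSq (S x) = ((d : ℝ) ^ n) ^ 2 := by
      intro x hx
      rw [hSM x (Finset.mem_filter.mp hx).2]
      have : ((d : ℂ)) ^ n = (((d : ℝ) ^ n : ℝ) : ℂ) := by push_cast; ring
      rw [this, Complex.normSq_ofReal]; ring
    rw [Finset.sum_congr rfl e, Finset.sum_const, hfilcard, nsmul_eq_mul]
    push_cast; ring
  have hnot : ∑ x ∈ Finset.univ.filter (fun x : (Fin n → ZMod d) × (Fin n → ZMod d) => ¬ x ∈ M), Complex.normSq (S x) = 0 := by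
    have := Finset.sum_filter_add_sum_filter_not Finset.univ (fun x : (Fin n → ZMod d) × (Fin n → ZMod d) => x ∈ M)
      (fun x => Complex.normSq (S x))
    rw [hfil, hParR] at this
    linarith
  have hzero : ∀ x : (Fin n → ZMod d) × (Fin n → ZMod d), x ∉ M → S x = 0 := by
    intro x hx
    have hmem : x ∈ Finset.univ.filter (fun x : (Fin n → ZMod d) × (Fin n → ZMod d) => ¬ x ∈ M) := by
      simp [Finset.mem_filter, hx]
    have := (Finset.sum_eq_zero_iff_of_nonneg
      (fun y _ => Complex.normSq_nonneg (S y))).mp hnot x hmem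
    exact Complex.normSq_eq_zero.mp this
  by_cases hu : u ∈ M
  · rw [if_pos hu]; exact hSM u hu
  · rw [if_neg hu]; exact hzero u hu

noncomputable def gfun (d n : ℕ) [NeZero d] (ψ : (Fin n → ZMod d) → ℂ)
    (b : (Fin n → ZMod d) × (Fin n → ZMod d)) : ℂ :=
  ∑ y : Fin n → ZMod d,
    chi d ((2⁻¹ : ZMod d) * (∑ i, b.1 i * b.2 i) - ∑ i, b.1 i * y i)
      * (ψ y * (starRingEnd ℂ) (ψ (y - b.2)))

lemma trace_weyl (d n : ℕ) [NeZero d] (ψ : (Fin n → ZMod d) → ℂ)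
    (b : (Fin n → ZMod d) × (Fin n → ZMod d)) :
    Matrix.trace ((weylV d n b)ᴴ * Matrix.vecMulVec ψ (star ψ)) = gfun d n ψ b := by
  classical
  rw [Matrix.trace]
  have h1 : ∀ x : Fin n → ZMod d,
      ((weylV d n b)ᴴ * Matrix.vecMulVec ψ (star ψ)).diag x
        = ∑ y : Fin n → ZMod d,
            (starRingEnd ℂ) (weyl d n b.1 b.2 y x) * (ψ y * (starRingEnd ℂ) (ψ x)) := by
    intro x
    rw [Matrix.diag_apply, Matrix.mul_apply]
    refine Finset.sum_congr rfl fun y _ => ?_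
    rw [Matrix.conjTranspose_apply, Matrix.vecMulVec_apply]
    simp only [weylV, Pi.star_apply, RCLike.star_def]
  rw [Finset.sum_congr rfl fun x _ => h1 x, Finset.sum_comm]
  refine Finset.sum_congr rfl fun y _ => ?_
  have h2 : ∀ x : Fin n → ZMod d,
      (starRingEnd ℂ) (weyl d n b.1 b.2 y x) * (ψ y * (starRingEnd ℂ) (ψ x))
        = if x = y - b.2 then
            chi d ((2⁻¹ : ZMod d) * (∑ i, b.1 i * b.2 i) - ∑ i, b.1 i * y i)
              * (ψ y * (starRingEnd ℂ) (ψ x)) else 0 := by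
    intro x
    simp only [weyl, Matrix.of_apply, _root_.map_mul, chi_conj]
    have e : -(-(2⁻¹ : ZMod d) * (∑ i, b.1 i * b.2 i) + ∑ i, b.1 i * y i)
        = (2⁻¹ : ZMod d) * (∑ i, b.1 i * b.2 i) - ∑ i, b.1 i * y i := by ring
    rw [e]
    by_cases hx : x = y - b.2 <;> simp [hx]
  rw [Finset.sum_congr rfl fun x _ => h2 x,
    Finset.sum_ite_eq' Finset.univ (y - b.2)
      (fun x => chi d ((2⁻¹ : ZMod d) * (∑ i, b.1 i * b.2 i) - ∑ i, b.1 i * y i)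
        * (ψ y * (starRingEnd ℂ) (ψ x)))]
  simp [gfun]

lemma gfun_stab (d n : ℕ) [NeZero d] (ψ : (Fin n → ZMod d) → ℂ)
    (hψ : ∑ x : Fin n → ZMod d, Complex.normSq (ψ x) = 1)
    (v m : (Fin n → ZMod d) × (Fin n → ZMod d))
    (hm : chi d (symp (ZMod d) n v m) • (weylV d n m).mulVec ψ = ψ) :
    gfun d n ψ m = chi d (symp (ZMod d) n v m) := by
  classical
  have hpt : ∀ y : Fin n → ZMod d,
      chi d (symp (ZMod d) n v m)
        * (chi d (-(2⁻¹ : ZMod d) * (∑ i, m.1 i * m.2 i) + ∑ i, m.1 i * y i) * ψ (y - m.2))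
      = ψ y := by
    intro y
    have h0 := congrFun hm y
    rw [Pi.smul_apply, Matrix.mulVec, dotProduct] at h0
    have h1 : ∀ z : Fin n → ZMod d, weylV d n m y z * ψ z
        = if z = y - m.2 then
            chi d (-(2⁻¹ : ZMod d) * (∑ i, m.1 i * m.2 i) + ∑ i, m.1 i * y i) * ψ z else 0 := by
      intro z
      simp only [weylV, weyl, Matrix.of_apply]
      by_cases hz : z = y - m.2 <;> simp [hz]
    rw [Finset.sum_congr rfl fun z _ => h1 z,
      Finset.sum_ite_eq' Finset.univ (y - m.2)
        (fun z => chi d (-(2⁻¹ : ZMod d) * (∑ i, m.1 i * m.2 i) + ∑ i, m.1 i * y i) * ψ z)] at h0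
    simpa [smul_eq_mul] using h0
  have hterm : ∀ y : Fin n → ZMod d,
      chi d ((2⁻¹ : ZMod d) * (∑ i, m.1 i * m.2 i) - ∑ i, m.1 i * y i)
        * (ψ y * (starRingEnd ℂ) (ψ (y - m.2)))
      = chi d (symp (ZMod d) n v m) * (Complex.normSq (ψ (y - m.2)) : ℂ) := by
    intro y
    rw [← hpt y]
    set A := (2⁻¹ : ZMod d) * (∑ i, m.1 i * m.2 i) - ∑ i, m.1 i * y i with hA
    have e : -(2⁻¹ : ZMod d) * (∑ i, m.1 i * m.2 i) + ∑ i, m.1 i * y i = -A := by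
      rw [hA]; ring
    rw [e, ← Complex.mul_conj]
    have h3 := chi_mul_chi_neg d A
    set cσ := chi d (symp (ZMod d) n v m)
    set φ := ψ (y - m.2)
    calc chi d A * (cσ * (chi d (-A) * φ) * (starRingEnd ℂ) φ)
        = (chi d A * chi d (-A)) * (cσ * (φ * (starRingEnd ℂ) φ)) := by ring
      _ = cσ * (φ * (starRingEnd ℂ) φ) := by rw [h3, one_mul]
  rw [gfun, Finset.sum_congr rfl fun y _ => hterm y, ← Finset.mul_sum]
  have hre : ∑ y : Fin n → ZMod d, (Complex.normSq (ψ (y - m.2)) : ℂ)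
      = ∑ y : Fin n → ZMod d, (Complex.normSq (ψ y) : ℂ) := by
    refine Fintype.sum_equiv (Equiv.subRight m.2) _ _ fun y => ?_
    simp [Equiv.subRight_apply]
  rw [hre, ← Complex.ofReal_sum, hψ]
  simp

lemma gfun_parseval (d n : ℕ) [NeZero d] (ψ : (Fin n → ZMod d) → ℂ)
    (hψ : ∑ x : Fin n → ZMod d, Complex.normSq (ψ x) = 1) :
    ∑ b : (Fin n → ZMod d) × (Fin n → ZMod d), Complex.normSq (gfun d n ψ b)
      = (d : ℝ) ^ n := by
  classical
  set h : ((Fin n → ZMod d) × (Fin n → ZMod d)) → ℂ :=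
    fun b => ∑ y : Fin n → ZMod d,
      chi d (-∑ i, b.1 i * y i) * (ψ y * (starRingEnd ℂ) (ψ (y - b.2))) with hh
  -- step 1 : normSq (gfun b) = normSq (h b)
  have step1 : ∀ b, Complex.normSq (gfun d n ψ b) = Complex.normSq (h b) := by
    intro b
    have e : gfun d n ψ b = chi d ((2⁻¹ : ZMod d) * (∑ i, b.1 i * b.2 i)) * h b := by
      rw [gfun]
      simp only [hh]
      conv_rhs => rw [Finset.mul_sum]
      refine Finset.sum_congr rfl fun y _ => ?_
      have e2 : chi d ((2⁻¹ : ZMod d) * (∑ i, b.1 i * b.2 i) - ∑ i, b.1 i * y i)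
          = chi d ((2⁻¹ : ZMod d) * (∑ i, b.1 i * b.2 i)) * chi d (-∑ i, b.1 i * y i) := by
        rw [← chi_add]
        congr 1
        ring
      rw [e2]
      ring
    rw [e, Complex.normSq_mul, normSq_chi, one_mul]
  -- step 2 : for fixed q, sum over p
  have step2 : ∀ q : Fin n → ZMod d,
      ∑ p : Fin n → ZMod d, (Complex.normSq (h (p, q)) : ℂ)
        = (d : ℂ) ^ n * ∑ y : Fin n → ZMod d,
            (Complex.normSq (ψ y * (starRingEnd ℂ) (ψ (y - q))) : ℂ) := by
    intro q
    set c : (Fin n → ZMod d) → ℂ := fun y => ψ y * (starRingEnd ℂ) (ψ (y - q)) with hc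
    have e1 : ∀ p : Fin n → ZMod d, (Complex.normSq (h (p, q)) : ℂ)
        = ∑ y : Fin n → ZMod d, ∑ y' : Fin n → ZMod d,
            chi d (∑ i, (y' - y) i * p i) * (c y * (starRingEnd ℂ) (c y')) := by
      intro p
      rw [← Complex.mul_conj]
      have econj : (starRingEnd ℂ) (h (p, q))
          = ∑ y' : Fin n → ZMod d, chi d (∑ i, p i * y' i) * (starRingEnd ℂ) (c y') := by
        rw [hh]
        simp only [map_sum, _root_.map_mul, chi_conj, neg_neg]
        simp [hc, _root_.map_mul, Complex.conj_conj]
      rw [econj, hh]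
      rw [Finset.sum_mul_sum]
      refine Finset.sum_congr rfl fun y _ => Finset.sum_congr rfl fun y' _ => ?_
      have : chi d (-∑ i, p i * y i) * chi d (∑ i, p i * y' i)
          = chi d (∑ i, (y' - y) i * p i) := by
        rw [← chi_add]
        congr 1
        simp only [Pi.sub_apply, sub_mul, Finset.sum_sub_distrib]
        rw [Finset.sum_congr rfl fun i _ => mul_comm (y' i) (p i),
          Finset.sum_congr rfl fun i _ => mul_comm (y i) (p i)]
        ring
      calc chi d (-∑ i, p i * y i) * c y * (chi d (∑ i, p i * y' i) * (starRingEnd ℂ) (c y'))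
          = (chi d (-∑ i, p i * y i) * chi d (∑ i, p i * y' i))
              * (c y * (starRingEnd ℂ) (c y')) := by ring
        _ = chi d (∑ i, (y' - y) i * p i) * (c y * (starRingEnd ℂ) (c y')) := by rw [this]
    calc ∑ p : Fin n → ZMod d, (Complex.normSq (h (p, q)) : ℂ)
        = ∑ p : Fin n → ZMod d, ∑ y : Fin n → ZMod d, ∑ y' : Fin n → ZMod d,
            chi d (∑ i, (y' - y) i * p i) * (c y * (starRingEnd ℂ) (c y')) :=
          Finset.sum_congr rfl fun p _ => e1 p
      _ = ∑ y : Fin n → ZMod d, ∑ y' : Fin n → ZMod d, ∑ p : Fin n → ZMod d,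
            chi d (∑ i, (y' - y) i * p i) * (c y * (starRingEnd ℂ) (c y')) := by
          rw [Finset.sum_comm]
          exact Finset.sum_congr rfl fun y _ => Finset.sum_comm
      _ = ∑ y : Fin n → ZMod d, ∑ y' : Fin n → ZMod d,
            (if y' - y = 0 then ((d : ℂ)) ^ n else 0) * (c y * (starRingEnd ℂ) (c y')) := by
          refine Finset.sum_congr rfl fun y _ => Finset.sum_congr rfl fun y' _ => ?_
          rw [← Finset.sum_mul, sum_chi_vec]
      _ = ∑ y : Fin n → ZMod d,
            (d : ℂ) ^ n * (c y * (starRingEnd ℂ) (c y)) := by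
          refine Finset.sum_congr rfl fun y _ => ?_
          have e2 : ∀ y' : Fin n → ZMod d,
              (if y' - y = 0 then ((d : ℂ)) ^ n else 0) * (c y * (starRingEnd ℂ) (c y'))
                = if y' = y then (d : ℂ) ^ n * (c y * (starRingEnd ℂ) (c y')) else 0 := by
            intro y'
            by_cases hy : y' = y <;> simp [hy, sub_eq_zero]
          rw [Finset.sum_congr rfl fun y' _ => e2 y',
            Finset.sum_ite_eq' Finset.univ y
              (fun y' => (d : ℂ) ^ n * (c y * (starRingEnd ℂ) (c y')))]
          simp
      _ = (d : ℂ) ^ n * ∑ y : Fin n → ZMod d, (Complex.normSq (c y) : ℂ) := by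
          rw [Finset.mul_sum]
          exact Finset.sum_congr rfl fun y _ => by rw [Complex.mul_conj]
  -- step 3 : assemble
  have step3 : ∑ b : (Fin n → ZMod d) × (Fin n → ZMod d), (Complex.normSq (gfun d n ψ b) : ℂ)
      = (d : ℂ) ^ n := by
    calc ∑ b : (Fin n → ZMod d) × (Fin n → ZMod d), (Complex.normSq (gfun d n ψ b) : ℂ)
        = ∑ p : Fin n → ZMod d, ∑ q : Fin n → ZMod d, (Complex.normSq (h (p, q)) : ℂ) := by
          rw [Fintype.sum_prod_type]
          exact Finset.sum_congr rfl fun p _ => Finset.sum_congr rfl fun q _ => by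
            rw [step1]
      _ = ∑ q : Fin n → ZMod d, ∑ p : Fin n → ZMod d, (Complex.normSq (h (p, q)) : ℂ) :=
          Finset.sum_comm
      _ = ∑ q : Fin n → ZMod d, (d : ℂ) ^ n * ∑ y : Fin n → ZMod d,
            (Complex.normSq (ψ y * (starRingEnd ℂ) (ψ (y - q))) : ℂ) :=
          Finset.sum_congr rfl fun q _ => step2 q
      _ = (d : ℂ) ^ n * ∑ y : Fin n → ZMod d, (Complex.normSq (ψ y) : ℂ)
            * ∑ q : Fin n → ZMod d, (Complex.normSq (ψ (y - q)) : ℂ) := by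
          rw [← Finset.mul_sum, Finset.sum_comm]
          congr 1
          refine Finset.sum_congr rfl fun y _ => ?_
          rw [Finset.mul_sum]
          refine Finset.sum_congr rfl fun q _ => ?_
          rw [Complex.normSq_mul, Complex.normSq_conj]
          push_cast
          ring
      _ = (d : ℂ) ^ n := by
          have hinner : ∀ y : Fin n → ZMod d,
              ∑ q : Fin n → ZMod d, (Complex.normSq (ψ (y - q)) : ℂ) = 1 := by
            intro y
            have : ∑ q : Fin n → ZMod d, (Complex.normSq (ψ (y - q)) : ℂ)
                = ∑ z : Fin n → ZMod d, (Complex.normSq (ψ z) : ℂ) := by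
              refine Fintype.sum_equiv (Equiv.subLeft y) _ _ fun q => ?_
              simp [Equiv.subLeft_apply]
            rw [this, ← Complex.ofReal_sum, hψ]
            simp
          rw [Finset.sum_congr rfl fun y _ => by rw [hinner y, mul_one]]
          rw [← Complex.ofReal_sum, hψ]
          simp
  have := step3
  rw [← Complex.ofReal_sum] at this
  exact_mod_cast this

lemma gfun_off (d n : ℕ) [NeZero d]
    (M : AddSubgroup ((Fin n → ZMod d) × (Fin n → ZMod d)))
    (hcard : Nat.card M = d ^ n)
    (ψ : (Fin n → ZMod d) → ℂ)
    (hψ : ∑ x : Fin n → ZMod d, Complex.normSq (ψ x) = 1)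
    (v : (Fin n → ZMod d) × (Fin n → ZMod d))
    (hval : ∀ m ∈ M, gfun d n ψ m = chi d (symp (ZMod d) n v m)) :
    ∀ b ∉ M, gfun d n ψ b = 0 := by
  classical
  have hcards : (Fintype.card M : ℕ) = d ^ n := by
    rw [← Nat.card_eq_fintype_card]; exact hcard
  have hfilcard : (Finset.univ.filter
      (fun x : (Fin n → ZMod d) × (Fin n → ZMod d) => x ∈ M)).card = d ^ n := by
    rw [← hcards, Fintype.card_subtype]
  have hfil : ∑ x ∈ Finset.univ.filter
      (fun x : (Fin n → ZMod d) × (Fin n → ZMod d) => x ∈ M), Complex.normSq (gfun d n ψ x)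
        = (d : ℝ) ^ n := by
    have e : ∀ x ∈ Finset.univ.filter
        (fun x : (Fin n → ZMod d) × (Fin n → ZMod d) => x ∈ M),
        Complex.normSq (gfun d n ψ x) = 1 := by
      intro x hx
      rw [hval x (Finset.mem_filter.mp hx).2, normSq_chi]
    rw [Finset.sum_congr rfl e, Finset.sum_const, hfilcard, nsmul_eq_mul]
    push_cast; ring
  have hnot : ∑ x ∈ Finset.univ.filter
      (fun x : (Fin n → ZMod d) × (Fin n → ZMod d) => ¬ x ∈ M),
        Complex.normSq (gfun d n ψ x) = 0 := by
    have := Finset.sum_filter_add_sum_filter_not Finset.univ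
      (fun x : (Fin n → ZMod d) × (Fin n → ZMod d) => x ∈ M)
      (fun x => Complex.normSq (gfun d n ψ x))
    rw [hfil, gfun_parseval d n ψ hψ] at this
    linarith
  intro b hb
  have hmem : b ∈ Finset.univ.filter
      (fun x : (Fin n → ZMod d) × (Fin n → ZMod d) => ¬ x ∈ M) := by
    simp [Finset.mem_filter, hb]
  have := (Finset.sum_eq_zero_iff_of_nonneg
    (fun y _ => Complex.normSq_nonneg (gfun d n ψ y))).mp hnot b hmem
  exact Complex.normSq_eq_zero.mp this

/-- The Wigner function of a stabilizer state `|M,v⟩` is `d^{-n}` times the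
indicator function of the coset `M + v`. -/
theorem stabilizer_wigner (d n : ℕ) [NeZero d] (hd : Odd d)
    (M : AddSubgroup ((Fin n → ZMod d) × (Fin n → ZMod d)))
    (hiso : ∀ m₁ ∈ M, ∀ m₂ ∈ M, symp (ZMod d) n m₁ m₂ = 0)
    (hcard : Nat.card M = d ^ n)
    (v : (Fin n → ZMod d) × (Fin n → ZMod d))
    (ψ : (Fin n → ZMod d) → ℂ)
    (hψ : ∑ x : Fin n → ZMod d, Complex.normSq (ψ x) = 1)
    (hstab : ∀ m ∈ M, chi d (symp (ZMod d) n v m) • (weylV d n m).mulVec ψ = ψ)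
    (a : (Fin n → ZMod d) × (Fin n → ZMod d)) :
    ((d : ℂ) ^ (2 * n))⁻¹ *
      ∑ b : (Fin n → ZMod d) × (Fin n → ZMod d),
        chi d (-(symp (ZMod d) n a b)) *
          Matrix.trace ((weylV d n b)ᴴ * Matrix.vecMulVec ψ (star ψ)) =
      if a - v ∈ M then ((d : ℂ) ^ n)⁻¹ else 0 := by
  classical
  have hval : ∀ m ∈ M, gfun d n ψ m = chi d (symp (ZMod d) n v m) := fun m hm =>
    gfun_stab d n ψ hψ v m (hstab m hm)
  have hoff := gfun_off d n M hcard ψ hψ v hval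
  have e1 : ∑ b : (Fin n → ZMod d) × (Fin n → ZMod d),
      chi d (-(symp (ZMod d) n a b))
        * Matrix.trace ((weylV d n b)ᴴ * Matrix.vecMulVec ψ (star ψ))
      = ∑ b : (Fin n → ZMod d) × (Fin n → ZMod d),
          chi d (-(symp (ZMod d) n a b)) * gfun d n ψ b :=
    Finset.sum_congr rfl fun b _ => by rw [trace_weyl]
  rw [e1]
  have e2 : ∑ b : (Fin n → ZMod d) × (Fin n → ZMod d),
      chi d (-(symp (ZMod d) n a b)) * gfun d n ψ b
      = ∑ b ∈ Finset.univ.filter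
          (fun x : (Fin n → ZMod d) × (Fin n → ZMod d) => x ∈ M),
          chi d (-(symp (ZMod d) n a b)) * gfun d n ψ b := by
    rw [← Finset.sum_filter_add_sum_filter_not Finset.univ
      (fun x : (Fin n → ZMod d) × (Fin n → ZMod d) => x ∈ M)
      (fun b => chi d (-(symp (ZMod d) n a b)) * gfun d n ψ b)]
    have : ∑ b ∈ Finset.univ.filter
        (fun x : (Fin n → ZMod d) × (Fin n → ZMod d) => ¬ x ∈ M),
        chi d (-(symp (ZMod d) n a b)) * gfun d n ψ b = 0 := by
      refine Finset.sum_eq_zero fun b hb => ?_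
      rw [hoff b (Finset.mem_filter.mp hb).2, mul_zero]
    rw [this, add_zero]
  rw [e2]
  have e3 : ∑ b ∈ Finset.univ.filter
      (fun x : (Fin n → ZMod d) × (Fin n → ZMod d) => x ∈ M),
      chi d (-(symp (ZMod d) n a b)) * gfun d n ψ b
      = ∑ m : M, chi d (symp (ZMod d) n (v - a) (m : (Fin n → ZMod d) × (Fin n → ZMod d))) := by
    have e3a : ∑ b ∈ Finset.univ.filter
        (fun x : (Fin n → ZMod d) × (Fin n → ZMod d) => x ∈ M),
        chi d (-(symp (ZMod d) n a b)) * gfun d n ψ b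
        = ∑ b ∈ Finset.univ.filter
            (fun x : (Fin n → ZMod d) × (Fin n → ZMod d) => x ∈ M),
            chi d (symp (ZMod d) n (v - a) b) := by
      refine Finset.sum_congr rfl fun b hb => ?_
      rw [hval b (Finset.mem_filter.mp hb).2, ← chi_add, symp_sub_left]
      congr 1
      ring
    have e3b : ∑ b ∈ Finset.univ.filter
        (fun x : (Fin n → ZMod d) × (Fin n → ZMod d) => x ∈ M),
        chi d (symp (ZMod d) n (v - a) b)
        = ∑ m : M, chi d (symp (ZMod d) n (v - a) (m : (Fin n → ZMod d) × (Fin n → ZMod d))) :=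
      Finset.sum_subtype _ (fun x => by simp) _
    rw [e3a, e3b]
  rw [e3, sum_chi_symp_sub d n M hiso hcard (v - a)]
  have hmemiff : (v - a ∈ M) = (a - v ∈ M) := by
    simp only [eq_iff_iff]
    constructor
    · intro h; simpa using M.neg_mem h
    · intro h; simpa using M.neg_mem h
  rw [hmemiff]
  by_cases hin : a - v ∈ M
  · rw [if_pos hin, if_pos hin]
    have hdc : (d : ℂ) ≠ 0 := Nat.cast_ne_zero.mpr (NeZero.ne d)
    rw [two_mul, pow_add]
    field_simp
  · rw [if_neg hin, if_neg hin, mul_zero]
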